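/- Let (M_n) be a locally square integrable real martingale with M_0 = 0. Then for all x > 0 and y > 0, P(|M_n| ≥ x and [M]_n + ⟨M⟩_n ≤ y) ≤ 2 exp(−x²/(2y)). -/

import Mathlib

open MeasureTheory ProbabilityTheory Real Finset

private lemma dlp_hasDerivAt (u : ℝ) :
    HasDerivAt (fun v : ℝ => (1 + v + v ^ 2 / 2) * Real.exp (v ^ 2 / 2 - v))
      ((u * (2 + u + u ^ 2) / 2) * Real.exp (u ^ 2 / 2 - u)) u := by
  have h1 : HasDerivAt (fun v : ℝ => 1 + v + v ^ 2 / 2) (1 + u) u := by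
    have := ((hasDerivAt_const u (1:ℝ)).add (hasDerivAt_id u)).add
      ((hasDerivAt_pow 2 u).div_const 2)
    exact this.congr_deriv (by norm_num)
  have h2 : HasDerivAt (fun v : ℝ => v ^ 2 / 2 - v) (u - 1) u := by
    have := ((hasDerivAt_pow 2 u).div_const 2).sub (hasDerivAt_id u)
    exact this.congr_deriv (by norm_num)
  have h3 := h2.exp
  have := h1.mul h3
  exact this.congr_deriv (by ring)

private lemma dlp_exp_ineq (u : ℝ) : Real.exp (u - u ^ 2 / 2) ≤ 1 + u + u ^ 2 / 2 := by
  set f : ℝ → ℝ := fun v => (1 + v + v ^ 2 / 2) * Real.exp (v ^ 2 / 2 - v) with hf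
  have hderiv : ∀ v, deriv f v = (v * (2 + v + v ^ 2) / 2) * Real.exp (v ^ 2 / 2 - v) :=
    fun v => (dlp_hasDerivAt v).deriv
  have hdiff : Differentiable ℝ f := fun v => (dlp_hasDerivAt v).differentiableAt
  have hone : 1 ≤ f u := by
    rcases le_total 0 u with hu | hu
    · have hmono : MonotoneOn f (Set.Ici 0) := by
        refine monotoneOn_of_deriv_nonneg (convex_Ici 0) hdiff.continuous.continuousOn
          hdiff.differentiableOn ?_
        intro v hv
        rw [interior_Ici] at hv
        rw [hderiv v]
        have h2 : (0:ℝ) < 2 + v + v ^ 2 := by nlinarith [sq_nonneg (v + 1)]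
        have := (Real.exp_pos (v ^ 2 / 2 - v)).le
        have hv' : (0:ℝ) ≤ v := le_of_lt hv
        positivity
      have := hmono (Set.self_mem_Ici) hu hu
      simpa [hf] using this
    · have hanti : AntitoneOn f (Set.Iic 0) := by
        refine antitoneOn_of_deriv_nonpos (convex_Iic 0) hdiff.continuous.continuousOn
          hdiff.differentiableOn ?_
        intro v hv
        rw [interior_Iic] at hv
        rw [hderiv v]
        have h2 : (0:ℝ) < 2 + v + v ^ 2 := by nlinarith [sq_nonneg (v + 1)]
        have h3 := (Real.exp_pos (v ^ 2 / 2 - v)).le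
        have hv' : v ≤ 0 := le_of_lt hv
        have : v * (2 + v + v ^ 2) / 2 ≤ 0 := by nlinarith
        exact mul_nonpos_of_nonpos_of_nonneg this h3
      have := hanti hu Set.self_mem_Iic hu
      simpa [hf] using this
  have hE : Real.exp (u - u ^ 2 / 2) * Real.exp (u ^ 2 / 2 - u) = 1 := by
    rw [← Real.exp_add]; ring_nf; exact Real.exp_zero
  have hEpos := Real.exp_pos (u ^ 2 / 2 - u)
  simp only [hf] at hone
  nlinarith [Real.exp_pos (u - u ^ 2 / 2)]

private lemma dlp_one_sided
    {Ω : Type*} {m0 : MeasurableSpace Ω} {μ : Measure Ω} [IsProbabilityMeasure μ]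
    {ℱ : Filtration ℕ m0} {M : ℕ → Ω → ℝ}
    (hM : Martingale M ℱ μ) (hM0 : M 0 = 0) (hMsq : ∀ n, MemLp (M n) 2 μ)
    (n : ℕ) {x y : ℝ} (hx : 0 < x) (hy : 0 < y) :
    μ {ω | x ≤ M n ω ∧
        (∑ k ∈ Finset.range n, ((M (1 + k) ω - M k ω) ^ 2
            + (μ[fun ω' => (M (1 + k) ω' - M k ω') ^ 2 | ℱ k]) ω)) ≤ y}
      ≤ ENNReal.ofReal (Real.exp (-x ^ 2 / (2 * y))) := by
  set c : ℝ := x / y with hc_def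
  have hc : 0 < c := div_pos hx hy
  set Q : ℕ → Ω → ℝ := fun j ω => ∑ k ∈ Finset.range j,
      ((M (1 + k) ω - M k ω) ^ 2 + (μ[fun ω' => (M (1 + k) ω' - M k ω') ^ 2 | ℱ k]) ω)
    with hQ
  set G : ℕ → Ω → ℝ := fun j ω => Real.exp (c * M j ω - c ^ 2 / 2 * Q j ω) with hG
  have hMint : ∀ k, Integrable (M k) μ := fun k => (hMsq k).integrable (by norm_num)
  have hD2mem : ∀ k, MemLp (fun ω => M (1 + k) ω - M k ω) 2 μ := fun k =>
    ((hMsq (1 + k)).sub (hMsq k))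
  have hD2int : ∀ k, Integrable (fun ω => (M (1 + k) ω - M k ω) ^ 2) μ := fun k =>
    (hD2mem k).integrable_sq
  have hDint : ∀ k, Integrable (fun ω => M (1 + k) ω - M k ω) μ := fun k =>
    (hD2mem k).integrable (by norm_num)
  have hCnn : ∀ k, 0 ≤ᵐ[μ] μ[fun ω' => (M (1 + k) ω' - M k ω') ^ 2 | ℱ k] := fun k =>
    condExp_nonneg (ae_of_all _ fun ω => sq_nonneg _)
  have hCnn_all : ∀ᵐ ω ∂μ, ∀ k, 0 ≤ (μ[fun ω' => (M (1 + k) ω' - M k ω') ^ 2 | ℱ k]) ω :=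
    ae_all_iff.2 fun k => hCnn k
  have hterm : ∀ (a : ℝ), c * a - c ^ 2 / 2 * a ^ 2 ≤ 1 / 2 := by
    intro a; nlinarith [sq_nonneg (c * a - 1)]
  have hGbd : ∀ j, ∀ᵐ ω ∂μ, ‖G j ω‖ ≤ Real.exp (j * (1 / 2)) := by
    intro j
    filter_upwards [hCnn_all] with ω hω
    have hMsum : M j ω = ∑ k ∈ Finset.range j, (M (1 + k) ω - M k ω) := by
      have h := Finset.sum_range_sub (fun k => M k ω) j
      have h0 : M 0 ω = 0 := congrFun hM0 ω
      rw [show (∑ k ∈ Finset.range j, (M (1 + k) ω - M k ω))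
          = ∑ k ∈ Finset.range j, (M (k + 1) ω - M k ω) from
        Finset.sum_congr rfl fun k _ => by rw [Nat.add_comm], h, h0, sub_zero]
    have hexp_le : c * M j ω - c ^ 2 / 2 * Q j ω ≤ j * (1 / 2) := by
      have e1 : c * M j ω = ∑ k ∈ Finset.range j, c * (M (1 + k) ω - M k ω) := by
        rw [hMsum, Finset.mul_sum]
      have e2 : Q j ω = (∑ k ∈ Finset.range j, (M (1 + k) ω - M k ω) ^ 2)
          + ∑ k ∈ Finset.range j, (μ[fun ω' => (M (1 + k) ω' - M k ω') ^ 2 | ℱ k]) ω :=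
        Finset.sum_add_distrib
      have e3 : c ^ 2 / 2 * ∑ k ∈ Finset.range j, (M (1 + k) ω - M k ω) ^ 2
          = ∑ k ∈ Finset.range j, c ^ 2 / 2 * (M (1 + k) ω - M k ω) ^ 2 :=
        Finset.mul_sum _ _ _
      have e4 : (∑ k ∈ Finset.range j, c * (M (1 + k) ω - M k ω))
            - ∑ k ∈ Finset.range j, c ^ 2 / 2 * (M (1 + k) ω - M k ω) ^ 2
          = ∑ k ∈ Finset.range j,
              (c * (M (1 + k) ω - M k ω) - c ^ 2 / 2 * (M (1 + k) ω - M k ω) ^ 2) :=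
        (Finset.sum_sub_distrib ..).symm
      rw [e1, e2]
      have h1 : (∑ k ∈ Finset.range j,
          (c * (M (1 + k) ω - M k ω) - c ^ 2 / 2 * (M (1 + k) ω - M k ω) ^ 2))
          ≤ ∑ _k ∈ Finset.range j, (1 / 2 : ℝ) :=
        Finset.sum_le_sum fun k _ => hterm _
      have h2 : (0:ℝ) ≤ ∑ k ∈ Finset.range j,
          (μ[fun ω' => (M (1 + k) ω' - M k ω') ^ 2 | ℱ k]) ω :=
        Finset.sum_nonneg fun k _ => hω k
      have h3 : (0:ℝ) ≤ c ^ 2 / 2 := by positivity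
      simp only [Finset.sum_const, Finset.card_range, nsmul_eq_mul] at h1
      have h2' : (0:ℝ) ≤ c ^ 2 / 2 * ∑ k ∈ Finset.range j,
          (μ[fun ω' => (M (1 + k) ω' - M k ω') ^ 2 | ℱ k]) ω := mul_nonneg h3 h2
      linarith [e3, e4, h1, h2']
    rw [Real.norm_eq_abs, abs_of_pos (Real.exp_pos _)]
    exact Real.exp_le_exp.2 hexp_le
  have hGsm : ∀ j, StronglyMeasurable[ℱ j] (G j) := by
    intro j
    apply Continuous.comp_stronglyMeasurable Real.continuous_exp
    apply StronglyMeasurable.sub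
    · exact ((hM.stronglyAdapted j).const_mul c)
    · apply StronglyMeasurable.const_mul
      apply Finset.stronglyMeasurable_fun_sum
      intro k hk
      have hk' : k < j := Finset.mem_range.1 hk
      have hsub : StronglyMeasurable[ℱ j] (fun ω => M (1 + k) ω - M k ω) :=
        ((hM.stronglyAdapted (1 + k)).mono (ℱ.mono (by omega))).sub
          ((hM.stronglyAdapted k).mono (ℱ.mono (by omega)))
      exact (hsub.pow 2).add (stronglyMeasurable_condExp.mono (ℱ.mono (by omega)))
  have hGint : ∀ j, Integrable (G j) μ := fun j =>
    ⟨((hGsm j).mono (ℱ.le j)).aestronglyMeasurable,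
      HasFiniteIntegral.of_bounded (hGbd j)⟩
  have hkey : ∀ j, ∫ ω, G j ω ∂μ ≤ 1 := by
    intro j
    induction j with
    | zero =>
      have h0 : G 0 = fun _ => (1:ℝ) := by
        funext ω
        simp only [hG, hQ, Finset.range_zero, Finset.sum_empty, congrFun hM0 ω]
        norm_num
      rw [h0]
      simp
    | succ j ih =>
      have h1j : (1 : ℕ) + j = j + 1 := Nat.add_comm 1 j
      set E : Ω → ℝ := fun ω =>
        Real.exp (c * (M (1 + j) ω - M j ω) - c ^ 2 / 2 * (M (1 + j) ω - M j ω) ^ 2) with hE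
      set A : Ω → ℝ := fun ω => G j ω *
        Real.exp (-(c ^ 2 / 2) * (μ[fun ω' => (M (1 + j) ω' - M j ω') ^ 2 | ℱ j]) ω) with hA
      have hsplit : G (j + 1) = fun ω => A ω * E ω := by
        funext ω
        simp only [hG, hA, hE, hQ, Finset.sum_range_succ]
        rw [← Real.exp_add, ← Real.exp_add]
        congr 1
        rw [← h1j]
        ring
      have hAsm : StronglyMeasurable[ℱ j] A :=
        (hGsm j).mul (Real.continuous_exp.comp_stronglyMeasurable
          (stronglyMeasurable_condExp.const_mul _))
      have hEbd : ∀ ω, ‖E ω‖ ≤ Real.exp (1 / 2) := by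
        intro ω
        rw [Real.norm_eq_abs, abs_of_pos (Real.exp_pos _)]
        exact Real.exp_le_exp.2 (hterm (M (1 + j) ω - M j ω))
      have hEsm : StronglyMeasurable E := by
        apply Continuous.comp_stronglyMeasurable Real.continuous_exp
        have hDsm : StronglyMeasurable (fun ω => M (1 + j) ω - M j ω) :=
          ((hM.stronglyAdapted (1 + j)).mono (ℱ.le _)).sub ((hM.stronglyAdapted j).mono (ℱ.le _))
        exact (hDsm.const_mul c).sub ((hDsm.pow 2).const_mul _)
      have hEint : Integrable E μ :=
        ⟨hEsm.aestronglyMeasurable, HasFiniteIntegral.of_bounded (ae_of_all _ hEbd)⟩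
      have hAEint : Integrable (fun ω => A ω * E ω) μ := by
        rw [← hsplit]; exact hGint (j + 1)
      have hAnn : ∀ ω, 0 ≤ A ω := fun ω =>
        mul_nonneg (Real.exp_pos _).le (Real.exp_pos _).le
      have hcondD : μ[(fun ω => M (1 + j) ω - M j ω) | ℱ j] =ᵐ[μ] 0 := by
        have hpi : (fun ω => M (1 + j) ω - M j ω) = M (1 + j) - M j := rfl
        rw [hpi]
        have h2 := condExp_sub (m := ℱ j) (μ := μ) (hMint (1 + j)) (hMint j)
        have h3 := hM.condExp_ae_eq (show j ≤ 1 + j by omega)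
        have h4 := hM.condExp_ae_eq (le_refl j)
        filter_upwards [h2, h3, h4] with ω e2 e3 e4
        simp only [Pi.sub_apply, Pi.zero_apply] at *
        rw [e2, e3, e4, sub_self]
      have hRint : Integrable ((fun _ : Ω => (1:ℝ)) + c • (fun ω => M (1 + j) ω - M j ω)
          + (c ^ 2 / 2) • (fun ω => (M (1 + j) ω - M j ω) ^ 2)) μ :=
        ((integrable_const (1:ℝ)).add ((hDint j).smul c)).add ((hD2int j).smul (c ^ 2 / 2))
      have hEleR : ∀ ω, E ω ≤ ((fun _ : Ω => (1:ℝ)) + c • (fun ω => M (1 + j) ω - M j ω)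
          + (c ^ 2 / 2) • (fun ω => (M (1 + j) ω - M j ω) ^ 2)) ω := by
        intro ω
        have hkey2 := dlp_exp_ineq (c * (M (1 + j) ω - M j ω))
        have e1 : c * (M (1 + j) ω - M j ω) - (c * (M (1 + j) ω - M j ω)) ^ 2 / 2
            = c * (M (1 + j) ω - M j ω) - c ^ 2 / 2 * (M (1 + j) ω - M j ω) ^ 2 := by ring
        rw [e1] at hkey2
        simp only [hE, Pi.add_apply, Pi.smul_apply, smul_eq_mul]
        nlinarith [hkey2]
      have hcond_le : μ[E | ℱ j] ≤ᵐ[μ] fun ω =>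
          Real.exp (c ^ 2 / 2 * (μ[fun ω' => (M (1 + j) ω' - M j ω') ^ 2 | ℱ j]) ω) := by
        have hmono := condExp_mono (m := ℱ j) hEint hRint (ae_of_all _ hEleR)
        have h5 := condExp_add (m := ℱ j) (μ := μ)
          ((integrable_const (1:ℝ)).add ((hDint j).smul c)) ((hD2int j).smul (c ^ 2 / 2))
        have h6 := condExp_add (m := ℱ j) (μ := μ) (integrable_const (1:ℝ)) ((hDint j).smul c)
        have h7 := condExp_smul (m := ℱ j) (μ := μ) c (fun ω => M (1 + j) ω - M j ω)
        have h8 := condExp_smul (m := ℱ j) (μ := μ) (c ^ 2 / 2)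
          (fun ω => (M (1 + j) ω - M j ω) ^ 2)
        have h9 := condExp_const (ℱ.le j) (1:ℝ) (μ := μ)
        filter_upwards [hmono, h5, h6, h7, h8, hcondD] with ω e0 e5 e6 e7 e8 eD
        have h10 := Real.add_one_le_exp
          (c ^ 2 / 2 * (μ[fun ω' => (M (1 + j) ω' - M j ω') ^ 2 | ℱ j]) ω)
        simp only [Pi.add_apply, Pi.smul_apply, Pi.zero_apply, smul_eq_mul] at e0 e5 e6 e7 e8 eD
        rw [e5, e6, e7, e8, eD] at e0
        simp only [h9] at e0
        linarith
      have hpull := condExp_mul_of_stronglyMeasurable_left (μ := μ) hAsm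
        (show Integrable (A * E) μ from hAEint) hEint
      have hAC : (fun ω => A ω *
            Real.exp (c ^ 2 / 2 * (μ[fun ω' => (M (1 + j) ω' - M j ω') ^ 2 | ℱ j]) ω)) = G j := by
        funext ω
        simp only [hA]
        have hz : -(c ^ 2 / 2) * (μ[fun ω' => (M (1 + j) ω' - M j ω') ^ 2 | ℱ j]) ω
            + c ^ 2 / 2 * (μ[fun ω' => (M (1 + j) ω' - M j ω') ^ 2 | ℱ j]) ω = 0 := by ring
        rw [mul_assoc, ← Real.exp_add, hz, Real.exp_zero, mul_one]
      calc ∫ ω, G (j + 1) ω ∂μ = ∫ ω, A ω * E ω ∂μ := by rw [hsplit]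
      _ = ∫ ω, (μ[A * E | ℱ j]) ω ∂μ := (integral_condExp (ℱ.le j)).symm
      _ = ∫ ω, A ω * (μ[E | ℱ j]) ω ∂μ := by
          refine integral_congr_ae ?_
          filter_upwards [hpull] with ω h
          simpa using h
      _ ≤ ∫ ω, A ω *
            Real.exp (c ^ 2 / 2 * (μ[fun ω' => (M (1 + j) ω' - M j ω') ^ 2 | ℱ j]) ω) ∂μ := by
          refine integral_mono_ae ((integrable_condExp (m := ℱ j) (f := fun ω => A ω * E ω)).congr ?_) (hAC ▸ hGint j) ?_
          · filter_upwards [hpull] with ω h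
            exact h
          · filter_upwards [hcond_le] with ω h
            exact mul_le_mul_of_nonneg_left h (hAnn ω)
      _ = ∫ ω, G j ω ∂μ := by rw [hAC]
      _ ≤ 1 := ih
  -- Markov step
  set ε : ℝ := Real.exp (c * x - c ^ 2 / 2 * y) with hε
  have hεpos : 0 < ε := Real.exp_pos _
  have hsub : {ω | x ≤ M n ω ∧ Q n ω ≤ y} ⊆ {ω | ε ≤ G n ω} := by
    intro ω hω
    obtain ⟨h1, h2⟩ := hω
    have e1 : c * x ≤ c * M n ω := mul_le_mul_of_nonneg_left h1 hc.le
    have e2 : c ^ 2 / 2 * Q n ω ≤ c ^ 2 / 2 * y :=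
      mul_le_mul_of_nonneg_left h2 (by positivity)
    exact Real.exp_le_exp.2 (by linarith)
  have hmark := mul_meas_ge_le_integral_of_nonneg
    (ae_of_all μ fun ω => (Real.exp_pos _).le) (hGint n) ε
  have h1 : (μ {ω | ε ≤ G n ω}).toReal ≤ 1 / ε := by
    rw [le_div_iff₀ hεpos]
    calc (μ {ω | ε ≤ G n ω}).toReal * ε = ε * (μ {ω | ε ≤ G n ω}).toReal := mul_comm _ _
    _ ≤ ∫ ω, G n ω ∂μ := hmark
    _ ≤ 1 := hkey n
  have h2 : (1:ℝ) / ε = Real.exp (-x ^ 2 / (2 * y)) := by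
    rw [hε, one_div, ← Real.exp_neg]
    congr 1
    rw [hc_def]
    field_simp
    ring
  calc μ {ω | x ≤ M n ω ∧ Q n ω ≤ y} ≤ μ {ω | ε ≤ G n ω} := measure_mono hsub
  _ = ENNReal.ofReal (μ {ω | ε ≤ G n ω}).toReal :=
      (ENNReal.ofReal_toReal (measure_ne_top μ _)).symm
  _ ≤ ENNReal.ofReal (Real.exp (-x ^ 2 / (2 * y))) := ENNReal.ofReal_le_ofReal (h2 ▸ h1)

/-- Theorem 2.1: for a locally square integrable real martingale `M` with `M 0 = 0`,
for all `x, y > 0`,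
`P(|M n| ≥ x, [M]_n + ⟨M⟩_n ≤ y) ≤ 2 exp(−x²/(2y))`. -/
theorem martingale_two_sided_exponential_inequality
    {Ω : Type*} {m0 : MeasurableSpace Ω} {μ : Measure Ω} [IsProbabilityMeasure μ]
    {ℱ : Filtration ℕ m0} {M : ℕ → Ω → ℝ}
    (hM : Martingale M ℱ μ) (hM0 : M 0 = 0) (hMsq : ∀ n, MemLp (M n) 2 μ)
    (n : ℕ) {x y : ℝ} (hx : 0 < x) (hy : 0 < y) :
    μ {ω | x ≤ |M n ω| ∧
        (∑ k ∈ Finset.Icc 1 n, (M k ω - M (k - 1) ω) ^ 2)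
          + (∑ k ∈ Finset.Icc 1 n,
              (μ[fun ω' => (M k ω' - M (k - 1) ω') ^ 2 | ℱ (k - 1)]) ω) ≤ y}
      ≤ ENNReal.ofReal (2 * Real.exp (-x ^ 2 / (2 * y))) := by
  have hIcc1 : ∀ ω : Ω, (∑ k ∈ Finset.Icc 1 n, (M k ω - M (k - 1) ω) ^ 2)
      = ∑ k ∈ Finset.range n, (M (1 + k) ω - M k ω) ^ 2 := by
    intro ω
    rw [← Finset.Ico_add_one_right_eq_Icc, Finset.sum_Ico_eq_sum_range]
    simp [Nat.add_sub_cancel_left]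
  have hIcc2 : ∀ ω : Ω, (∑ k ∈ Finset.Icc 1 n,
        (μ[fun ω' => (M k ω' - M (k - 1) ω') ^ 2 | ℱ (k - 1)]) ω)
      = ∑ k ∈ Finset.range n, (μ[fun ω' => (M (1 + k) ω' - M k ω') ^ 2 | ℱ k]) ω := by
    intro ω
    rw [← Finset.Ico_add_one_right_eq_Icc, Finset.sum_Ico_eq_sum_range]
    simp [Nat.add_sub_cancel_left]
  have key₁ := dlp_one_sided hM hM0 hMsq n hx hy
  have key₂ := dlp_one_sided hM.neg (by simp [hM0]) (fun k => (hMsq k).neg) n hx hy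
  have hneg2 : ∀ a b : ℝ, (-a - -b) ^ 2 = (a - b) ^ 2 := by intros; ring
  simp only [Pi.neg_apply, hneg2] at key₂
  have hset : {ω | x ≤ |M n ω| ∧
        (∑ k ∈ Finset.Icc 1 n, (M k ω - M (k - 1) ω) ^ 2)
          + (∑ k ∈ Finset.Icc 1 n,
              (μ[fun ω' => (M k ω' - M (k - 1) ω') ^ 2 | ℱ (k - 1)]) ω) ≤ y}
      = {ω | x ≤ |M n ω| ∧
          (∑ k ∈ Finset.range n, ((M (1 + k) ω - M k ω) ^ 2
            + (μ[fun ω' => (M (1 + k) ω' - M k ω') ^ 2 | ℱ k]) ω)) ≤ y} := by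
    ext ω
    rw [Set.mem_setOf_eq, Set.mem_setOf_eq, hIcc1 ω, hIcc2 ω, ← Finset.sum_add_distrib]
  rw [hset]
  have hsub : {ω | x ≤ |M n ω| ∧
          (∑ k ∈ Finset.range n, ((M (1 + k) ω - M k ω) ^ 2
            + (μ[fun ω' => (M (1 + k) ω' - M k ω') ^ 2 | ℱ k]) ω)) ≤ y}
      ⊆ {ω | x ≤ M n ω ∧
          (∑ k ∈ Finset.range n, ((M (1 + k) ω - M k ω) ^ 2
            + (μ[fun ω' => (M (1 + k) ω' - M k ω') ^ 2 | ℱ k]) ω)) ≤ y}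
        ∪ {ω | x ≤ -M n ω ∧
          (∑ k ∈ Finset.range n, ((M (1 + k) ω - M k ω) ^ 2
            + (μ[fun ω' => (M (1 + k) ω' - M k ω') ^ 2 | ℱ k]) ω)) ≤ y} := by
    rintro ω ⟨h1, h2⟩
    rcases le_abs.1 h1 with h | h
    · exact Or.inl ⟨h, h2⟩
    · exact Or.inr ⟨h, h2⟩
  calc μ _ ≤ μ (_ ∪ _) := measure_mono hsub
  _ ≤ _ + _ := measure_union_le _ _
  _ ≤ ENNReal.ofReal (Real.exp (-x ^ 2 / (2 * y)))
      + ENNReal.ofReal (Real.exp (-x ^ 2 / (2 * y))) := add_le_add key₁ key₂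
  _ = ENNReal.ofReal (2 * Real.exp (-x ^ 2 / (2 * y))) := by
      rw [← ENNReal.ofReal_add (Real.exp_nonneg _) (Real.exp_nonneg _)]
      congr 1
      ring
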